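/- For the inversion map, the second-derivative identity v^n δ_α^n (∂v^μ/∂v̂^β) + v^n δ_β^n (∂v^μ/∂v̂^α) = ∂²v^μ/∂v̂^α ∂v̂^β + η_{αβ} v^n δ_1^μ holds for all 1 ≤ α, β, μ ≤ n. -/

import Mathlib

noncomputable section

/-- The anti-diagonal metric `η_{αβ} = δ_{α+β,n+1}` (0-based: `α+β = n-1`). -/
def eta (n : ℕ) (α β : Fin n) : ℝ := if (α : ℕ) + (β : ℕ) = n - 1 then 1 else 0

/-- The last index (1-based index `n`). -/
def lastI (n : ℕ) (hn : 0 < n) : Fin n := ⟨n - 1, by omega⟩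

/-- The first index (1-based index `1`). -/
def firstI (n : ℕ) (hn : 0 < n) : Fin n := ⟨0, hn⟩

/-- The inversion map: `v̂¹ = ½ (η_{αβ} v^α v^β)/vⁿ`, `v̂^i = v^i/vⁿ` for `2 ≤ i ≤ n-1`,
`v̂ⁿ = -1/vⁿ`. -/
def invMap (n : ℕ) (hn : 0 < n) (v : Fin n → ℝ) : Fin n → ℝ := fun α =>
  if (α : ℕ) = 0 then
    (1 / 2) * (∑ β, ∑ γ, eta n β γ * v β * v γ) / v (lastI n hn)
  else if (α : ℕ) = n - 1 then
    -1 / v (lastI n hn)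
  else
    v α / v (lastI n hn)


/-- Partial derivative `∂f/∂v^i`. -/
def pd {n : ℕ} (f : (Fin n → ℝ) → ℝ) (i : Fin n) (x : Fin n → ℝ) : ℝ :=
  fderiv ℝ f x (Pi.single i 1)

set_option maxHeartbeats 1000000
set_option maxRecDepth 4000

namespace InvAux

variable {n : ℕ}

lemma hasFDerivAt_eval (i : Fin n) (x : Fin n → ℝ) :
    HasFDerivAt (fun y : Fin n → ℝ => y i)
      (ContinuousLinearMap.proj (R := ℝ) (φ := fun _ : Fin n => ℝ) i) x :=
  (ContinuousLinearMap.proj (R := ℝ) (φ := fun _ : Fin n => ℝ) i).hasFDerivAt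

lemma pd_eq {f : (Fin n → ℝ) → ℝ} {f' : (Fin n → ℝ) →L[ℝ] ℝ} {x : Fin n → ℝ}
    (h : HasFDerivAt f f' x) (i : Fin n) : pd f i x = f' (Pi.single i 1) := by
  unfold pd; rw [h.fderiv]

def sg (n : ℕ) (hn : 0 < n) (i : Fin n) : Fin n := ⟨n - 1 - i, by omega⟩

lemma sg_sg (hn : 0 < n) (i : Fin n) : sg n hn (sg n hn i) = i := by
  have := i.isLt
  apply Fin.ext
  simp [sg]; omega

lemma sg_eq_iff (hn : 0 < n) (i j : Fin n) :
    i = sg n hn j ↔ (i : ℕ) + (j : ℕ) = n - 1 := by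
  have := i.isLt; have := j.isLt
  rw [Fin.ext_iff]
  simp only [sg]
  omega

def Sq (n : ℕ) (x : Fin n → ℝ) : ℝ := ∑ β, ∑ γ, eta n β γ * x β * x γ

lemma Sq_eq (hn : 0 < n) (x : Fin n → ℝ) : Sq n x = ∑ β, x β * x (sg n hn β) := by
  unfold Sq
  refine Finset.sum_congr rfl fun β _ => ?_
  have h : ∀ γ : Fin n, eta n β γ * x β * x γ = (if γ = sg n hn β then x β * x γ else 0) := by
    intro γ
    have hβ := β.isLt; have hγ := γ.isLt
    unfold eta
    by_cases hc : (β:ℕ) + (γ:ℕ) = n - 1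
    · have : γ = sg n hn β := by apply Fin.ext; simp [sg]; omega
      rw [if_pos this, if_pos hc]; ring
    · have : γ ≠ sg n hn β := by
        intro hγe; apply hc; rw [hγe]; simp [sg]; omega
      simp [hc, this]
  rw [Finset.sum_congr rfl fun γ _ => h γ, Finset.sum_ite_eq']
  simp

def DSq (n : ℕ) (hn : 0 < n) (x : Fin n → ℝ) : (Fin n → ℝ) →L[ℝ] ℝ :=
  ∑ β : Fin n, (x β • ContinuousLinearMap.proj (sg n hn β) +
    x (sg n hn β) • ContinuousLinearMap.proj β)

lemma hasFDerivAt_Sq (hn : 0 < n) (x : Fin n → ℝ) :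
    HasFDerivAt (Sq n) (DSq n hn x) x := by
  have he : Sq n = fun y => ∑ β, y β * y (sg n hn β) := funext fun y => Sq_eq hn y
  rw [he]
  exact HasFDerivAt.fun_sum fun β _ =>
    (hasFDerivAt_eval β x).fun_mul (hasFDerivAt_eval (sg n hn β) x)

lemma DSq_single (hn : 0 < n) (x : Fin n → ℝ) (j : Fin n) :
    DSq n hn x (Pi.single j 1) = 2 * x (sg n hn j) := by
  unfold DSq
  simp only [ContinuousLinearMap.sum_apply, ContinuousLinearMap.add_apply,
    ContinuousLinearMap.smul_apply, ContinuousLinearMap.proj_apply, smul_eq_mul,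
    Pi.single_apply]
  rw [Finset.sum_add_distrib]
  have h1 : ∑ β : Fin n, x β * (if sg n hn β = j then (1:ℝ) else 0) = x (sg n hn j) := by
    have h : ∀ β : Fin n, x β * (if sg n hn β = j then (1:ℝ) else 0) =
        (if β = sg n hn j then x β else 0) := by
      intro β
      rcases eq_or_ne β (sg n hn j) with hb | hb
      · subst hb; simp [sg_sg]
      · have : sg n hn β ≠ j := fun hc => hb (by rw [← hc, sg_sg])
        simp [this, hb]
    rw [Finset.sum_congr rfl fun β _ => h β, Finset.sum_ite_eq']
    simp
  have h2 : ∑ β : Fin n, x (sg n hn β) * (if β = j then (1:ℝ) else 0) = x (sg n hn j) := by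
    have h : ∀ β : Fin n, x (sg n hn β) * (if β = j then (1:ℝ) else 0) =
        (if β = j then x (sg n hn β) else 0) := by
      intro β; split <;> simp
    rw [Finset.sum_congr rfl fun β _ => h β, Finset.sum_ite_eq']
    simp
  rw [h1, h2]; ring


lemma hasFDerivAt_div' {g h : (Fin n → ℝ) → ℝ} {g' h' : (Fin n → ℝ) →L[ℝ] ℝ}
    {x : Fin n → ℝ} (hg : HasFDerivAt g g' x) (hh : HasFDerivAt h h' x) (hx : h x ≠ 0) :
    HasFDerivAt (fun y => g y / h y)
      (g x • ((-((h x) ^ 2)⁻¹) • h') + (h x)⁻¹ • g') x := by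
  have hinv : HasFDerivAt (fun y => (h y)⁻¹) ((-((h x) ^ 2)⁻¹) • h') x := by
    have hc := (hasFDerivAt_inv hx).comp x hh
    refine hc.congr_fderiv ?_
    ext v
    simp [mul_comm]
  have hm := hg.fun_mul hinv
  simpa [div_eq_mul_inv] using hm

lemma two_le_pos (hn : 2 ≤ n) : 0 < n := by omega

lemma invMap_first (hn : 2 ≤ n) (x : Fin n → ℝ) :
    invMap n (two_le_pos hn) x (firstI n (two_le_pos hn)) =
      (1/2) * Sq n x / x (lastI n (two_le_pos hn)) := by
  simp [invMap, firstI, Sq]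

lemma invMap_last (hn : 2 ≤ n) (x : Fin n → ℝ) :
    invMap n (two_le_pos hn) x (lastI n (two_le_pos hn)) = -1 / x (lastI n (two_le_pos hn)) := by
  unfold invMap
  rw [if_neg (by simp [lastI]; omega), if_pos (by simp [lastI])]

lemma invMap_mid (hn : 2 ≤ n) (x : Fin n → ℝ) {μ : Fin n}
    (h0 : (μ : ℕ) ≠ 0) (hl : (μ : ℕ) ≠ n - 1) :
    invMap n (two_le_pos hn) x μ = x μ / x (lastI n (two_le_pos hn)) := by
  unfold invMap
  rw [if_neg h0, if_neg hl]

/-- first-level pd formulas -/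
lemma pd_first (hn : 2 ≤ n) {x : Fin n → ℝ} (hx : x (lastI n (two_le_pos hn)) ≠ 0) (j : Fin n) :
    pd (fun y => invMap n (two_le_pos hn) y (firstI n (two_le_pos hn))) j x =
      x (sg n (two_le_pos hn) j) / x (lastI n (two_le_pos hn)) -
        (if j = lastI n (two_le_pos hn) then 1 else 0) * Sq n x /
          (2 * (x (lastI n (two_le_pos hn)))^2) := by
  have h2 : (0:ℕ) < n := by omega
  have hfe : (fun y => invMap n (two_le_pos hn) y (firstI n (two_le_pos hn))) =
      fun y => (1/2) * Sq n y / y (lastI n h2) := funext fun y => invMap_first hn y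
  rw [hfe]
  have hd := hasFDerivAt_div' ((hasFDerivAt_Sq h2 x).const_mul (1/2)) (hasFDerivAt_eval (lastI n h2) x) hx
  rw [pd_eq hd]
  simp only [ContinuousLinearMap.add_apply, ContinuousLinearMap.smul_apply,
    ContinuousLinearMap.proj_apply, DSq_single, Pi.single_apply, smul_eq_mul]
  rcases eq_or_ne j (lastI n h2) with hj | hj
  · rw [if_pos hj.symm, if_pos hj]
    field_simp
    ring
  · rw [if_neg (Ne.symm hj), if_neg hj]
    field_simp
    ring

lemma pd_last (hn : 2 ≤ n) {x : Fin n → ℝ} (hx : x (lastI n (two_le_pos hn)) ≠ 0) (j : Fin n) :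
    pd (fun y => invMap n (two_le_pos hn) y (lastI n (two_le_pos hn))) j x =
      (if j = lastI n (two_le_pos hn) then 1 else 0) / (x (lastI n (two_le_pos hn)))^2 := by
  have h2 : (0:ℕ) < n := by omega
  have hfe : (fun y => invMap n (two_le_pos hn) y (lastI n (two_le_pos hn))) =
      fun y => -1 / y (lastI n h2) := funext fun y => invMap_last hn y
  rw [hfe]
  have hd := hasFDerivAt_div' (hasFDerivAt_const (-1:ℝ) x) (hasFDerivAt_eval (lastI n h2) x) hx
  rw [pd_eq hd]
  simp only [ContinuousLinearMap.add_apply, ContinuousLinearMap.smul_apply,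
    ContinuousLinearMap.proj_apply, ContinuousLinearMap.zero_apply, Pi.single_apply,
    smul_eq_mul]
  rcases eq_or_ne j (lastI n h2) with hj | hj
  · rw [if_pos hj.symm, if_pos hj]; field_simp; simp
  · rw [if_neg (Ne.symm hj), if_neg hj]; simp

lemma pd_mid (hn : 2 ≤ n) {x : Fin n → ℝ} (hx : x (lastI n (two_le_pos hn)) ≠ 0) {μ : Fin n}
    (h0 : (μ : ℕ) ≠ 0) (hl : (μ : ℕ) ≠ n - 1) (j : Fin n) :
    pd (fun y => invMap n (two_le_pos hn) y μ) j x =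
      (if j = μ then 1 else 0) / x (lastI n (two_le_pos hn)) -
        (if j = lastI n (two_le_pos hn) then 1 else 0) * x μ / (x (lastI n (two_le_pos hn)))^2 := by
  have h2 : (0:ℕ) < n := by omega
  have hfe : (fun y => invMap n (two_le_pos hn) y μ) =
      fun y => y μ / y (lastI n h2) := funext fun y => invMap_mid hn y h0 hl
  rw [hfe]
  have hd := hasFDerivAt_div' (hasFDerivAt_eval μ x) (hasFDerivAt_eval (lastI n h2) x) hx
  rw [pd_eq hd]
  simp only [ContinuousLinearMap.add_apply, ContinuousLinearMap.smul_apply,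
    ContinuousLinearMap.proj_apply, Pi.single_apply, smul_eq_mul]
  rcases eq_or_ne j μ with hjm | hjm
  · subst hjm
    rcases eq_or_ne j (lastI n h2) with hj | hj
    · exfalso; apply hl; rw [hj]; simp [lastI]
    · simp only [if_neg hj, if_neg (Ne.symm hj)]
      field_simp
      simp
  · rcases eq_or_ne j (lastI n h2) with hj | hj
    · subst hj
      simp only [if_neg hjm, if_neg (Ne.symm hjm)]
      field_simp
      simp
    · simp only [if_neg hjm, if_neg hj, if_neg (Ne.symm hjm), if_neg (Ne.symm hj)]
      simp


lemma pd_pd_congr (h2 : 0 < n) {vh : Fin n → ℝ} (hv : vh (lastI n h2) ≠ 0)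
    {f G : (Fin n → ℝ) → ℝ} (hfg : ∀ x, x (lastI n h2) ≠ 0 → f x = G x) (i : Fin n) :
    pd f i vh = pd G i vh := by
  have hev : f =ᶠ[nhds vh] G := by
    filter_upwards [(continuous_apply (lastI n h2)).continuousAt.eventually_ne hv] with x hx
      using hfg x hx
  unfold pd
  rw [hev.fderiv_eq]

def pj (n : ℕ) (i : Fin n) : (Fin n → ℝ) →L[ℝ] ℝ := ContinuousLinearMap.proj i

@[simp] lemma pj_apply (i : Fin n) (v : Fin n → ℝ) : pj n i v = v i := rfl

lemma hasFDerivAt_sqL (h2 : 0 < n) (x : Fin n → ℝ) :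
    HasFDerivAt (fun y : Fin n → ℝ => (y (lastI n h2))^2)
      (x (lastI n h2) • pj n (lastI n h2) + x (lastI n h2) • pj n (lastI n h2)) x := by
  have := (hasFDerivAt_eval (lastI n h2) x).fun_mul (hasFDerivAt_eval (lastI n h2) x)
  simp only [← pow_two] at this; exact this

lemma hasFDerivAt_2sqL (h2 : 0 < n) (x : Fin n → ℝ) :
    HasFDerivAt (fun y : Fin n → ℝ => 2 * (y (lastI n h2))^2)
      ((2:ℝ) • (x (lastI n h2) • pj n (lastI n h2) + x (lastI n h2) • pj n (lastI n h2))) x :=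
  (hasFDerivAt_sqL h2 x).const_mul 2

lemma pd_G2 (hn : 2 ≤ n) {x : Fin n → ℝ} (hx : x (lastI n (two_le_pos hn)) ≠ 0) (j i : Fin n) :
    pd (fun y => (if j = lastI n (two_le_pos hn) then (1:ℝ) else 0) /
        (y (lastI n (two_le_pos hn)))^2) i x =
      -2 * (if j = lastI n (two_le_pos hn) then 1 else 0) * (if i = lastI n (two_le_pos hn) then 1 else 0)
        / (x (lastI n (two_le_pos hn)))^3 := by
  have h2 : (0:ℕ) < n := by omega
  have hL : ∀ h : 0 < n, lastI n h = lastI n h2 := fun _ => rfl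
  have hS : ∀ h : 0 < n, sg n h = sg n h2 := fun _ => rfl
  have hd := hasFDerivAt_div'
    (hasFDerivAt_const (if j = lastI n h2 then (1:ℝ) else 0) x)
    (hasFDerivAt_sqL h2 x) (pow_ne_zero 2 hx)
  rw [pd_eq hd]
  simp only [ContinuousLinearMap.add_apply, ContinuousLinearMap.smul_apply,
    ContinuousLinearMap.proj_apply, ContinuousLinearMap.zero_apply, pj_apply,
    Pi.single_apply, smul_eq_mul]
  simp only [hL]
  clear hd hL hS
  split_ifs
  all_goals subst_vars
  all_goals (try (exact absurd rfl (by assumption)))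
  all_goals (try (exfalso; simp only [Fin.ext_iff, sg, lastI, firstI] at *; omega))
  all_goals (field_simp; try ring)

lemma pd_G3 (hn : 2 ≤ n) {x : Fin n → ℝ} (hx : x (lastI n (two_le_pos hn)) ≠ 0) (μ j i : Fin n) :
    pd (fun y => (if j = μ then (1:ℝ) else 0) / y (lastI n (two_le_pos hn)) -
        (if j = lastI n (two_le_pos hn) then 1 else 0) * y μ / (y (lastI n (two_le_pos hn)))^2) i x =
      -((if j = μ then 1 else 0) * (if i = lastI n (two_le_pos hn) then 1 else 0)) /
          (x (lastI n (two_le_pos hn)))^2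
        - (if j = lastI n (two_le_pos hn) then 1 else 0) * (if i = μ then 1 else 0) /
          (x (lastI n (two_le_pos hn)))^2
        + 2 * (if j = lastI n (two_le_pos hn) then 1 else 0) * (if i = lastI n (two_le_pos hn) then 1 else 0)
          * x μ / (x (lastI n (two_le_pos hn)))^3 := by
  have h2 : (0:ℕ) < n := by omega
  have hL : ∀ h : 0 < n, lastI n h = lastI n h2 := fun _ => rfl
  have hS : ∀ h : 0 < n, sg n h = sg n h2 := fun _ => rfl
  have hd := (hasFDerivAt_div' (hasFDerivAt_const (if j = μ then (1:ℝ) else 0) x)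
      (hasFDerivAt_eval (lastI n h2) x) hx).fun_sub
    (hasFDerivAt_div' ((hasFDerivAt_eval μ x).const_mul (if j = lastI n h2 then (1:ℝ) else 0))
      (hasFDerivAt_sqL h2 x) (pow_ne_zero 2 hx))
  rw [pd_eq hd]
  simp only [ContinuousLinearMap.sub_apply, ContinuousLinearMap.add_apply,
    ContinuousLinearMap.smul_apply, ContinuousLinearMap.proj_apply,
    ContinuousLinearMap.zero_apply, pj_apply, Pi.single_apply, smul_eq_mul]
  simp only [hL]
  clear hd hL hS
  split_ifs
  all_goals subst_vars
  all_goals (try (exact absurd rfl (by assumption)))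
  all_goals (try (exfalso; simp only [Fin.ext_iff, sg, lastI, firstI] at *; omega))
  all_goals (field_simp; try ring)

lemma pd_G1 (hn : 2 ≤ n) {x : Fin n → ℝ} (hx : x (lastI n (two_le_pos hn)) ≠ 0) (j i : Fin n) :
    pd (fun y => y (sg n (two_le_pos hn) j) / y (lastI n (two_le_pos hn)) -
        (if j = lastI n (two_le_pos hn) then 1 else 0) * Sq n y /
          (2 * (y (lastI n (two_le_pos hn)))^2)) i x =
      (if i = sg n (two_le_pos hn) j then 1 else 0) / x (lastI n (two_le_pos hn))
        - (if i = lastI n (two_le_pos hn) then 1 else 0) * x (sg n (two_le_pos hn) j) /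
          (x (lastI n (two_le_pos hn)))^2
        - (if j = lastI n (two_le_pos hn) then 1 else 0) * x (sg n (two_le_pos hn) i) /
          (x (lastI n (two_le_pos hn)))^2
        + (if j = lastI n (two_le_pos hn) then 1 else 0) * (if i = lastI n (two_le_pos hn) then 1 else 0)
          * Sq n x / (x (lastI n (two_le_pos hn)))^3 := by
  have h2 : (0:ℕ) < n := by omega
  have hL : ∀ h : 0 < n, lastI n h = lastI n h2 := fun _ => rfl
  have hS : ∀ h : 0 < n, sg n h = sg n h2 := fun _ => rfl
  have hden : 2 * (x (lastI n h2))^2 ≠ 0 := by positivity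
  have hd := (hasFDerivAt_div' (hasFDerivAt_eval (sg n h2 j) x)
      (hasFDerivAt_eval (lastI n h2) x) hx).fun_sub
    (hasFDerivAt_div' ((hasFDerivAt_Sq h2 x).const_mul (if j = lastI n h2 then (1:ℝ) else 0))
      (hasFDerivAt_2sqL h2 x) hden)
  rw [pd_eq hd]
  simp only [ContinuousLinearMap.sub_apply, ContinuousLinearMap.add_apply,
    ContinuousLinearMap.smul_apply, ContinuousLinearMap.proj_apply, DSq_single,
    pj_apply, Pi.single_apply, smul_eq_mul]
  simp only [hL, hS]
  clear hd hL hS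
  split_ifs
  all_goals subst_vars
  all_goals (try (exact absurd rfl (by assumption)))
  all_goals (try (exfalso; simp only [Fin.ext_iff, sg, lastI, firstI] at *; omega))
  all_goals (field_simp; try ring)

lemma eta_eq (h2 : 0 < n) (α β : Fin n) :
    eta n α β = if α = sg n h2 β then 1 else 0 := by
  unfold eta
  exact if_congr (sg_eq_iff h2 α β).symm rfl rfl

end InvAux

open InvAux in
/-- the second-derivative identity
`vⁿ δ_α^n ∂v^μ/∂v̂^β + vⁿ δ_β^n ∂v^μ/∂v̂^α = ∂²v^μ/∂v̂^α∂v̂^β + η_{αβ} vⁿ δ_1^μ`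
for the inverse `v = v(v̂)` of the inversion map (which is given by the same formula `invMap`),
all derivatives taken with respect to the hatted coordinates. -/
theorem inversion_second_derivative_identity (n : ℕ) (hn : 2 ≤ n) (vh : Fin n → ℝ)
    (hv : vh (lastI n (by omega)) ≠ 0) (α β μ : Fin n) :
    invMap n (by omega) vh (lastI n (by omega)) *
        (if α = lastI n (by omega) then 1 else 0) *
        pd (fun x => invMap n (by omega) x μ) β vh +
      invMap n (by omega) vh (lastI n (by omega)) *
        (if β = lastI n (by omega) then 1 else 0) *
        pd (fun x => invMap n (by omega) x μ) α vh
    = pd (fun x => pd (fun y => invMap n (by omega) y μ) β x) α vh +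
      eta n α β * invMap n (by omega) vh (lastI n (by omega)) *
        (if μ = firstI n (by omega) then 1 else 0) := by
  have h2 : (0:ℕ) < n := by omega
  have hIM : ∀ h : 0 < n, invMap n h = invMap n h2 := fun _ => rfl
  have hL : ∀ h : 0 < n, lastI n h = lastI n h2 := fun _ => rfl
  have hF : ∀ h : 0 < n, firstI n h = firstI n h2 := fun _ => rfl
  have hS' : ∀ h : 0 < n, sg n h = sg n h2 := fun _ => rfl
  have hv' : vh (lastI n h2) ≠ 0 := hv
  simp only [hIM, hL, hF]
  have eL := invMap_last hn vh
  simp only [hIM, hL] at eL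
  rw [eL]
  by_cases hmu0 : (μ:ℕ) = 0
  · -- μ = firstI
    have hμ : μ = firstI n h2 := by apply Fin.ext; simpa [firstI] using hmu0
    rw [hμ]
    have e1 := pd_first hn hv' β
    have e2 := pd_first hn hv' α
    simp only [hIM, hL, hF, hS'] at e1 e2
    have e3 : pd (fun x => pd (fun y => invMap n h2 y (firstI n h2)) β x) α vh =
        pd (fun y => y (sg n h2 β) / y (lastI n h2) -
          (if β = lastI n h2 then 1 else 0) * Sq n y / (2 * (y (lastI n h2))^2)) α vh := by
      refine pd_pd_congr h2 hv' (fun x hx => ?_) α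
      have e := pd_first hn hx β
      simp only [hIM, hL, hF, hS'] at e
      exact e
    have e4 := pd_G1 hn hv' β α
    simp only [hIM, hL, hF, hS'] at e4
    rw [e1, e2, e3, e4, eta_eq h2 α β]
    split_ifs
    all_goals (try (exact absurd rfl (by assumption)))
    all_goals (try (exfalso; simp only [Fin.ext_iff, sg, lastI, firstI] at *; omega))
    all_goals (field_simp; try ring)
    all_goals simp
  · by_cases hmul : (μ:ℕ) = n - 1
    · -- μ = lastI
      have hμ : μ = lastI n h2 := by apply Fin.ext; simpa [lastI] using hmul
      rw [hμ]
      have e1 := pd_last hn hv' β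
      have e2 := pd_last hn hv' α
      simp only [hIM, hL, hF, hS'] at e1 e2
      have e3 : pd (fun x => pd (fun y => invMap n h2 y (lastI n h2)) β x) α vh =
          pd (fun y => (if β = lastI n h2 then (1:ℝ) else 0) / (y (lastI n h2))^2) α vh := by
        refine pd_pd_congr h2 hv' (fun x hx => ?_) α
        have e := pd_last hn hx β
        simp only [hIM, hL, hF, hS'] at e
        exact e
      have e4 := pd_G2 hn hv' β α
      simp only [hIM, hL, hF, hS'] at e4
      rw [e1, e2, e3, e4]
      split_ifs
      all_goals (try (exact absurd rfl (by assumption)))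
      all_goals (try (exfalso; simp only [Fin.ext_iff, sg, lastI, firstI] at *; omega))
      all_goals (field_simp; try ring)
    · -- middle μ
      have e1 := pd_mid hn hv' hmu0 hmul β
      have e2 := pd_mid hn hv' hmu0 hmul α
      simp only [hIM, hL, hF, hS'] at e1 e2
      have e3 : pd (fun x => pd (fun y => invMap n h2 y μ) β x) α vh =
          pd (fun y => (if β = μ then (1:ℝ) else 0) / y (lastI n h2) -
            (if β = lastI n h2 then 1 else 0) * y μ / (y (lastI n h2))^2) α vh := by
        refine pd_pd_congr h2 hv' (fun x hx => ?_) α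
        have e := pd_mid hn hx hmu0 hmul β
        simp only [hIM, hL, hF, hS'] at e
        exact e
      have e4 := pd_G3 hn hv' μ β α
      simp only [hIM, hL, hF, hS'] at e4
      rw [e1, e2, e3, e4]
      split_ifs
      all_goals (try (exact absurd rfl (by assumption)))
      all_goals (try (exfalso; simp only [Fin.ext_iff, sg, lastI, firstI] at *; omega))
      all_goals (field_simp; try ring)
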